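/- Let M be a nontrivial matroid (rank at least 1 and no coloop). Then the fractional transversal number of the basis hypergraph of M equals the edge toughness of M: τ_f(H_B(M)) = σ'(M), where σ'(M) = min over S ⊆ V with ρ_M(V) > ρ_M(S) of |V∖S|/(ρ_M(V) − ρ_M(S)). -/

import Mathlib

open Classical

/-- The rank of a subset of a (finite) matroid, computed as the largest intersection of
the subset with a basis. -/
noncomputable def matroidRank {n : ℕ} (M : Matroid (Fin n)) (S : Finset (Fin n)) : ℕ :=
  sSup {k : ℕ | ∃ B : Set (Fin n), M.IsBase B ∧ k = (S.filter (· ∈ B)).card}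

namespace Stmt14Aux

variable {n : ℕ}

lemma rank_bddAbove (M : Matroid (Fin n)) (S : Finset (Fin n)) :
    BddAbove {k : ℕ | ∃ B : Set (Fin n), M.IsBase B ∧ k = (S.filter (· ∈ B)).card} := by
  refine ⟨S.card, ?_⟩
  rintro k ⟨B, -, rfl⟩
  exact Finset.card_filter_le _ _

lemma rank_nonempty (M : Matroid (Fin n)) (S : Finset (Fin n)) :
    {k : ℕ | ∃ B : Set (Fin n), M.IsBase B ∧ k = (S.filter (· ∈ B)).card}.Nonempty := by
  obtain ⟨B, hB⟩ := M.exists_isBase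
  exact ⟨_, B, hB, rfl⟩

lemma card_filter_le_rank (M : Matroid (Fin n)) (S : Finset (Fin n)) {B : Set (Fin n)}
    (hB : M.IsBase B) : (S.filter (· ∈ B)).card ≤ matroidRank M S :=
  le_csSup (rank_bddAbove M S) ⟨B, hB, rfl⟩

lemma rank_le (M : Matroid (Fin n)) (S : Finset (Fin n)) {m : ℕ}
    (h : ∀ B : Set (Fin n), M.IsBase B → (S.filter (· ∈ B)).card ≤ m) :
    matroidRank M S ≤ m :=
  csSup_le (rank_nonempty M S) (by rintro k ⟨B, hB, rfl⟩; exact h B hB)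

lemma rank_mono (M : Matroid (Fin n)) {S T : Finset (Fin n)} (h : S ⊆ T) :
    matroidRank M S ≤ matroidRank M T :=
  rank_le M S fun B hB =>
    le_trans (Finset.card_le_card (Finset.filter_subset_filter _ h)) (card_filter_le_rank M T hB)

lemma base_card (M : Matroid (Fin n)) {B : Set (Fin n)} (hB : M.IsBase B) :
    (Finset.univ.filter (· ∈ B)).card = matroidRank M Finset.univ := by
  refine le_antisymm (card_filter_le_rank M _ hB) ?_
  have hmem : matroidRank M Finset.univ ∈
      {k : ℕ | ∃ B : Set (Fin n), M.IsBase B ∧ k = (Finset.univ.filter (· ∈ B)).card} :=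
    Nat.sSup_mem (rank_nonempty M Finset.univ) (rank_bddAbove M Finset.univ)
  obtain ⟨B₁, hB₁, h1⟩ := hmem
  rw [h1]
  have e1 : (Finset.univ.filter (· ∈ B₁)) = B₁.toFinset := by ext v; simp
  have e2 : (Finset.univ.filter (· ∈ B)) = B.toFinset := by ext v; simp
  rw [e1, e2]
  have hen := hB₁.encard_eq_encard_of_isBase hB
  rw [Set.encard_eq_coe_toFinset_card, Set.encard_eq_coe_toFinset_card] at hen
  exact_mod_cast le_of_eq hen

lemma rank_le_of_basis (M : Matroid (Fin n)) (A : Finset (Fin n)) {I B : Set (Fin n)}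
    (hI : M.IsBasis I ↑A) (hIB : I ⊆ B) :
    matroidRank M A ≤ (A.filter (· ∈ B)).card := by
  have hItF : I.toFinset ⊆ A.filter (· ∈ B) := by
    intro v hv
    rw [Set.mem_toFinset] at hv
    exact Finset.mem_filter.2 ⟨by exact_mod_cast hI.subset hv, hIB hv⟩
  refine le_trans (rank_le M A ?_) (Finset.card_le_card hItF)
  intro B' hB'
  have hind : M.Indep (↑A ∩ B' : Set (Fin n)) := hB'.indep.subset Set.inter_subset_right
  obtain ⟨J, hJ, hJsub⟩ := hind.subset_isBasis_of_subset Set.inter_subset_left hI.subset_ground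
  have h1 : (↑A ∩ B' : Set (Fin n)).encard ≤ I.encard :=
    le_of_le_of_eq (Set.encard_le_encard hJsub) (hJ.encard_eq_encard hI)
  have e1 : A.filter (· ∈ B') = (↑A ∩ B' : Set (Fin n)).toFinset := by ext v; simp
  rw [e1]
  rw [Set.encard_eq_coe_toFinset_card, Set.encard_eq_coe_toFinset_card] at h1
  exact_mod_cast h1

lemma exists_basis_chain (M : Matroid (Fin n)) (A : ℕ → Set (Fin n))
    (hmono : ∀ i, A i ⊆ A (i+1)) (hA : ∀ i, A i ⊆ M.E) :
    ∃ I : ℕ → Set (Fin n), (∀ i, M.IsBasis (I i) (A i)) ∧ ∀ i, I i ⊆ I (i+1) := by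
  choose f hf hsub using fun (i : ℕ) (p : {J : Set (Fin n) // M.IsBasis J (A i)}) =>
    p.2.indep.subset_isBasis_of_subset (p.2.subset.trans (hmono i)) (hA (i+1))
  obtain ⟨I0, hI0⟩ := M.exists_isBasis (A 0) (hA 0)
  let g : ∀ i : ℕ, {J : Set (Fin n) // M.IsBasis J (A i)} :=
    fun i => Nat.rec ⟨I0, hI0⟩ (fun k p => ⟨f k p, hf k p⟩) i
  exact ⟨fun i => (g i).1, fun i => (g i).2, fun i => hsub i (g i)⟩

lemma abel_sum (f g : ℕ → ℝ) (m : ℕ) :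
    ∑ i ∈ Finset.range m, f i * (g (i+1) - g i)
      = ∑ i ∈ Finset.range m, (f i - if i = 0 then 0 else f (i-1)) * (g m - g i) := by
  induction m with
  | zero => simp
  | succ m ih =>
    set F : ℕ → ℝ := fun i => if i = 0 then 0 else f (i-1) with hF
    have hFs : ∀ i, F (i+1) = f i := fun i => by simp [hF]
    have htel : ∑ i ∈ Finset.range (m+1), (f i - F i) = f m := by
      calc ∑ i ∈ Finset.range (m+1), (f i - F i)
          = ∑ i ∈ Finset.range (m+1), (F (i+1) - F i) :=
            Finset.sum_congr rfl fun i _ => by rw [hFs]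
        _ = F (m+1) - F 0 := Finset.sum_range_sub F (m+1)
        _ = f m := by rw [hFs]; simp [hF]
    calc ∑ i ∈ Finset.range (m+1), f i * (g (i+1) - g i)
        = ∑ i ∈ Finset.range m, f i * (g (i+1) - g i) + f m * (g (m+1) - g m) :=
          Finset.sum_range_succ _ m
      _ = ∑ i ∈ Finset.range m, (f i - F i) * (g m - g i) + f m * (g (m+1) - g m) := by rw [ih]
      _ = ∑ i ∈ Finset.range (m+1), (f i - F i) * (g m - g i) + f m * (g (m+1) - g m) := by
          rw [Finset.sum_range_succ]; simp
      _ = ∑ i ∈ Finset.range (m+1), (f i - F i) * (g m - g i)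
            + (∑ i ∈ Finset.range (m+1), (f i - F i)) * (g (m+1) - g m) := by rw [htel]
      _ = ∑ i ∈ Finset.range (m+1), ((f i - F i) * (g m - g i) + (f i - F i) * (g (m+1) - g m)) := by
          rw [Finset.sum_add_distrib, Finset.sum_mul]
      _ = ∑ i ∈ Finset.range (m+1), (f i - F i) * (g (m+1) - g i) :=
          Finset.sum_congr rfl fun i _ => by ring

end Stmt14Aux

open Stmt14Aux

/-- For a nontrivial matroid `M` (rank at least 1 and no coloop), the fractional
transversal number of the basis hypergraph of `M` equals the edge toughness
`σ'(M) = min {|V∖S| / (ρ(V) - ρ(S)) : ρ(V) > ρ(S)}`. -/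
theorem stmt14 {n : ℕ} (M : Matroid (Fin n)) (hE : M.E = Set.univ)
    (hrank : 1 ≤ matroidRank M Finset.univ)
    (hNoColoop : ∀ v : Fin n, ∃ B : Set (Fin n), M.IsBase B ∧ v ∉ B)
    (t s : ℝ)
    -- fractional transversal number of the basis hypergraph
    (ht : IsLeast {r : ℝ | ∃ x : Fin n → ℝ, 0 ≤ x ∧
        (∀ B : Set (Fin n), M.IsBase B → 1 ≤ ∑ v : Fin n, (if v ∈ B then x v else 0)) ∧
        r = ∑ v : Fin n, x v} t)
    -- edge toughness σ'(M)
    (hs : IsLeast {q : ℝ | ∃ S : Finset (Fin n),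
        matroidRank M S < matroidRank M Finset.univ ∧
        q = (Sᶜ.card : ℝ) / ((matroidRank M Finset.univ : ℝ) - (matroidRank M S : ℝ))} s) :
    t = s := by
  classical
  obtain ⟨⟨x, hx0, hxfeas, hxt⟩, htlb⟩ := ht
  obtain ⟨⟨S, hSlt, hsval⟩, hslb⟩ := hs
  set r : ℕ := matroidRank M Finset.univ with hrdef
  set ρS : ℕ := matroidRank M S with hρSdef
  have hrpos : (0:ℝ) < (r:ℝ) - (ρS:ℝ) := by
    have : (ρS:ℝ) < (r:ℝ) := by exact_mod_cast hSlt
    linarith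
  have hs0 : 0 ≤ s := by
    rw [hsval]
    exact div_nonneg (Nat.cast_nonneg _) hrpos.le
  -- Part A : t ≤ s
  have hts : t ≤ s := by
    set c : ℝ := ((r:ℝ) - (ρS:ℝ))⁻¹ with hc
    have hc0 : 0 ≤ c := inv_nonneg.2 hrpos.le
    refine htlb ⟨fun v => if v ∈ S then 0 else c, ?_, ?_, ?_⟩
    · intro v
      dsimp
      split
      · exact le_rfl
      · exact hc0
    · intro B hB
      have heq : ∑ v : Fin n, (if v ∈ B then (if v ∈ S then 0 else c) else 0)
          = ((Finset.univ.filter (fun v => v ∈ B ∧ v ∉ S)).card : ℝ) * c := by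
        calc ∑ v : Fin n, (if v ∈ B then (if v ∈ S then 0 else c) else 0)
            = ∑ v : Fin n, (if v ∈ B ∧ v ∉ S then c else 0) :=
              Finset.sum_congr rfl fun v _ => by
                by_cases h1 : v ∈ B <;> by_cases h2 : v ∈ S <;> simp [h1, h2]
          _ = ∑ _v ∈ Finset.univ.filter (fun v => v ∈ B ∧ v ∉ S), c :=
              (Finset.sum_filter _ _).symm
          _ = ((Finset.univ.filter (fun v => v ∈ B ∧ v ∉ S)).card : ℝ) * c := by
              rw [Finset.sum_const, nsmul_eq_mul]
      rw [heq]
      have hdisj : Disjoint (Finset.univ.filter (fun v => v ∈ B ∧ v ∉ S)) (S.filter (· ∈ B)) := by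
        rw [Finset.disjoint_left]
        intro a ha hb
        exact (Finset.mem_filter.1 ha).2.2 (Finset.mem_filter.1 hb).1
      have hsplit : (Finset.univ.filter (· ∈ B)).card
          = (Finset.univ.filter (fun v => v ∈ B ∧ v ∉ S)).card + (S.filter (· ∈ B)).card := by
        rw [← Finset.card_union_of_disjoint hdisj]
        congr 1
        ext v
        simp only [Finset.mem_filter, Finset.mem_univ, true_and, Finset.mem_union]
        by_cases h2 : v ∈ S <;> simp [h2] <;> tauto
      have h1 : (S.filter (· ∈ B)).card ≤ ρS := card_filter_le_rank M S hB
      have h2 : (Finset.univ.filter (· ∈ B)).card = r := base_card M hB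
      have hcard : (r:ℝ) - (ρS:ℝ)
          ≤ ((Finset.univ.filter (fun v => v ∈ B ∧ v ∉ S)).card : ℝ) := by
        have : r ≤ (Finset.univ.filter (fun v => v ∈ B ∧ v ∉ S)).card + ρS := by omega
        have := (Nat.cast_le (α := ℝ)).2 this
        push_cast at this
        linarith
      have := mul_le_mul_of_nonneg_right hcard hc0
      rwa [hc, mul_inv_cancel₀ hrpos.ne'] at this
    · rw [hsval]
      refine Eq.symm ?_
      calc ∑ v : Fin n, (if v ∈ S then 0 else c)
          = ∑ v : Fin n, (if v ∉ S then c else 0) :=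
            Finset.sum_congr rfl fun v _ => by by_cases h2 : v ∈ S <;> simp [h2]
        _ = ∑ _v ∈ Finset.univ.filter (fun v => v ∉ S), c := (Finset.sum_filter _ _).symm
        _ = ((Finset.univ.filter (fun v => v ∉ S)).card : ℝ) * c := by
            rw [Finset.sum_const, nsmul_eq_mul]
        _ = ((Sᶜ.card : ℝ)) * c := by
            rw [show Finset.univ.filter (fun v => v ∉ S) = Sᶜ from by ext v; simp]
        _ = ((Sᶜ.card : ℝ)) / ((r:ℝ) - (ρS:ℝ)) := by
            rw [hc, div_eq_mul_inv]
  -- Part B : s ≤ t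
  have hst : s ≤ t := by
    set σ : Equiv.Perm (Fin n) := Tuple.sort x with hσ
    have hxsort : Monotone (x ∘ σ) := Tuple.monotone_sort x
    set A : ℕ → Finset (Fin n) :=
      fun i => Finset.univ.filter (fun v => ((σ.symm v : Fin n) : ℕ) < i) with hA
    have hA0 : A 0 = ∅ := by
      ext v; simp [hA]
    have hins : ∀ i (hi : i < n),
        σ ⟨i, hi⟩ ∉ A i ∧ A (i+1) = insert (σ ⟨i, hi⟩) (A i) := by
      intro i hi
      constructor
      · simp [hA]
      · ext v
        simp only [hA, Finset.mem_insert, Finset.mem_filter, Finset.mem_univ, true_and]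
        rw [Nat.lt_succ_iff_lt_or_eq]
        have h1 : ((σ.symm v : Fin n) : ℕ) = i ↔ σ.symm v = ⟨i, hi⟩ := by
          rw [Fin.ext_iff]
        have h2 : σ.symm v = ⟨i, hi⟩ ↔ v = σ ⟨i, hi⟩ := by
          rw [Equiv.symm_apply_eq]
        rw [h1, h2]
        tauto
    have hAmono : ∀ i, A i ⊆ A (i+1) := by
      intro i
      exact Finset.monotone_filter_right _ fun v _ h => Nat.lt_succ_of_lt h
    have hAn : ∀ i, n ≤ i → A i = Finset.univ := by
      intro i h
      ext v
      simp only [hA, Finset.mem_filter, Finset.mem_univ, true_and, iff_true]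
      exact lt_of_lt_of_le (σ.symm v).isLt h
    have hAcard : ∀ i, i ≤ n → (A i).card = i := by
      intro i
      induction i with
      | zero => intro _; simp [hA0]
      | succ k ihk =>
        intro h
        have hk : k < n := h
        rw [(hins k hk).2, Finset.card_insert_of_notMem (hins k hk).1, ihk hk.le]
    obtain ⟨I, hIb, hIsub⟩ := exists_basis_chain M (fun i => ↑(A i))
      (fun i => Finset.coe_subset.2 (hAmono i)) (fun i => by rw [hE]; exact Set.subset_univ _)
    have hImono : Monotone I := monotone_nat_of_le_succ hIsub
    have hBbase : M.IsBase (I n) := by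
      have h := hIb n
      rw [hAn n le_rfl] at h
      rw [← Matroid.isBasis_ground_iff, hE]
      simpa using h
    set B : Set (Fin n) := I n with hBdef
    set Z : ℕ → ℝ := fun i => if h : i < n then x (σ ⟨i, h⟩) else 0 with hZ
    set C : ℕ → ℝ := fun i => (((A i).filter (· ∈ B)).card : ℝ) with hC
    set N : ℕ → ℝ := fun i => (i : ℝ) with hN
    have hZj : ∀ j : Fin n, Z (j : ℕ) = x (σ j) := by
      intro j
      rw [hZ]
      dsimp only
      rw [dif_pos j.isLt]
    have hD0 : ∀ i ∈ Finset.range n, 0 ≤ Z i - (if i = 0 then 0 else Z (i-1)) := by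
      intro i hi
      rw [Finset.mem_range] at hi
      match i with
      | 0 =>
        have he : (if (0:ℕ) = 0 then (0:ℝ) else Z (0-1)) = 0 := by simp
        rw [he, sub_zero, hZ]
        dsimp only
        rw [dif_pos hi]
        exact hx0 _
      | (k+1) =>
        have hk : k < n := Nat.lt_of_succ_lt hi
        have he : (if (k+1:ℕ) = 0 then (0:ℝ) else Z (k+1-1)) = Z k := by simp
        rw [he, hZ]
        dsimp only
        rw [dif_pos hi, dif_pos hk]
        have hle : (⟨k, hk⟩ : Fin n) ≤ ⟨k+1, hi⟩ := by
          simp [Fin.le_def]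
        have h2 := hxsort hle
        simp only [Function.comp_apply] at h2
        linarith
    have hsum_t : ∑ v : Fin n, x v = ∑ i ∈ Finset.range n, Z i := by
      rw [← Equiv.sum_comp σ x, ← Fin.sum_univ_eq_sum_range (fun i => Z i) n]
      exact Finset.sum_congr rfl fun j _ => (hZj j).symm
    have hCdiff : ∀ i (hi : i < n), C (i+1) - C i = if σ ⟨i, hi⟩ ∈ B then 1 else 0 := by
      intro i hi
      obtain ⟨hnot, hinsEq⟩ := hins i hi
      rw [hC]
      dsimp only
      rw [hinsEq, Finset.filter_insert]
      split
      · rw [Finset.card_insert_of_notMem (fun hmem => hnot (Finset.mem_of_mem_filter _ hmem))]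
        push_cast
        ring
      · ring
    have hfeas : (1:ℝ) ≤ ∑ i ∈ Finset.range n, Z i * (C (i+1) - C i) := by
      refine le_trans (hxfeas B hBbase) (le_of_eq ?_)
      rw [← Equiv.sum_comp σ (fun v => if v ∈ B then x v else 0),
        ← Fin.sum_univ_eq_sum_range (fun i => Z i * (C (i+1) - C i)) n]
      refine Finset.sum_congr rfl fun j _ => ?_
      rw [hCdiff (j:ℕ) j.isLt, hZj j]
      have hje : (⟨(j:ℕ), j.isLt⟩ : Fin n) = j := Fin.eta j j.isLt
      rw [hje]
      split_ifs with hmem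
      · ring
      · ring
    have hCn : C n = (r : ℝ) := by
      rw [hC]
      dsimp only
      rw [hAn n le_rfl]
      exact_mod_cast base_card M hBbase
    have hkey : ∀ i ∈ Finset.range n, s * (C n - C i) ≤ (n : ℝ) - i := by
      intro i hi
      rw [Finset.mem_range] at hi
      have h1 : (matroidRank M (A i) : ℝ) ≤ C i := by
        rw [hC]
        dsimp only
        exact_mod_cast rank_le_of_basis M (A i) (hIb i) (hImono (le_of_lt hi))
      have hρler : matroidRank M (A i) ≤ r := rank_mono M (Finset.subset_univ _)
      have h2 : s * ((r:ℝ) - (matroidRank M (A i) : ℝ)) ≤ (n:ℝ) - i := by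
        rcases lt_or_eq_of_le hρler with hlt | heq
        · have hmem : (((A i)ᶜ.card : ℝ) / ((r:ℝ) - (matroidRank M (A i) : ℝ))) ∈
              {q : ℝ | ∃ S : Finset (Fin n),
                matroidRank M S < matroidRank M Finset.univ ∧
                q = (Sᶜ.card : ℝ) /
                  ((matroidRank M Finset.univ : ℝ) - (matroidRank M S : ℝ))} :=
            ⟨A i, hlt, rfl⟩
          have hsle := hslb hmem
          have hpos : (0:ℝ) < (r:ℝ) - (matroidRank M (A i) : ℝ) := by
            have : ((matroidRank M (A i) : ℝ)) < (r:ℝ) := by exact_mod_cast hlt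
            linarith
          have hmul := (le_div_iff₀ hpos).1 hsle
          have hcc : ((A i)ᶜ.card : ℝ) = (n : ℝ) - i := by
            rw [Finset.card_compl, hAcard i hi.le]
            have : (A i).card ≤ n := by rw [hAcard i hi.le]; exact hi.le
            rw [Fintype.card_fin]
            push_cast [Nat.cast_sub hi.le]
            ring
          linarith
        · rw [heq]
          simp only [sub_self, mul_zero]
          have : (i:ℝ) ≤ (n:ℝ) := by exact_mod_cast hi.le
          linarith
      calc s * (C n - C i) ≤ s * ((r:ℝ) - (matroidRank M (A i) : ℝ)) := by
            apply mul_le_mul_of_nonneg_left _ hs0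
            rw [hCn]
            linarith
        _ ≤ (n:ℝ) - i := h2
    have hstep : s ≤ ∑ i ∈ Finset.range n, Z i := by
      calc s = s * 1 := (mul_one s).symm
        _ ≤ s * ∑ i ∈ Finset.range n, Z i * (C (i+1) - C i) :=
            mul_le_mul_of_nonneg_left hfeas hs0
        _ = ∑ i ∈ Finset.range n,
              (Z i - if i = 0 then 0 else Z (i-1)) * (s * (C n - C i)) := by
            rw [abel_sum Z C n, Finset.mul_sum]
            exact Finset.sum_congr rfl fun i _ => by ring
        _ ≤ ∑ i ∈ Finset.range n, (Z i - if i = 0 then 0 else Z (i-1)) * ((n:ℝ) - i) :=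
            Finset.sum_le_sum fun i hi =>
              mul_le_mul_of_nonneg_left (hkey i hi) (hD0 i hi)
        _ = ∑ i ∈ Finset.range n, (Z i - if i = 0 then 0 else Z (i-1)) * (N n - N i) := rfl
        _ = ∑ i ∈ Finset.range n, Z i * (N (i+1) - N i) := (abel_sum Z N n).symm
        _ = ∑ i ∈ Finset.range n, Z i := by
            refine Finset.sum_congr rfl fun i _ => ?_
            rw [hN]
            dsimp only
            push_cast
            ring
    rw [hxt, hsum_t]
    exact hstep
  exact le_antisymm hts hst
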